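/- arXiv:2102.02187 — 3 statements merged into one kernel-verified Lean document; each statement's English description precedes it below -/
import Mathlib

section
/- Let ρ^{AB} be a nonzero positive semidefinite operator on A⊗B, where A and B are finite-dimensional complex Hilbert spaces. Then Tr[(ρ^B)²] ≤ |A|·Tr[(ρ^{AB})²] and Tr[(ρ^{AB})²] ≤ |A|·Tr[(ρ^B)²]; equivalently, 1/|A| ≤ Tr[(ρ^{AB})²]/Tr[(ρ^B)²] ≤ |A|. -/
open scoped Kronecker ComplexOrder
open MeasureTheory Matrix

noncomputable section

namespace QIT

section UnitaryTopology

variable (n : Type*) [Fintype n] [DecidableEq n]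

instance : MeasurableSpace (Matrix.unitaryGroup n ℂ) := borel _
instance : BorelSpace (Matrix.unitaryGroup n ℂ) := ⟨rfl⟩

instance : IsTopologicalGroup (Matrix.unitaryGroup n ℂ) where
  continuous_mul := by
    apply Continuous.subtype_mk
    exact Continuous.matrix_mul (continuous_subtype_val.comp continuous_fst)
      (continuous_subtype_val.comp continuous_snd)
  continuous_inv := by
    have h : Continuous fun U : Matrix.unitaryGroup n ℂ => star U :=
      Continuous.subtype_mk (continuous_star.comp continuous_subtype_val) _
    simpa [← Unitary.star_eq_inv] using h

instance : CompactSpace (Matrix.unitaryGroup n ℂ) := by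
  apply isCompact_iff_compactSpace.mp
  have hclosed : IsClosed ((Matrix.unitaryGroup n ℂ : Set (Matrix n n ℂ))) := by
    have h1 : IsClosed {M : Matrix n n ℂ | star M * M = 1} :=
      isClosed_eq (Continuous.matrix_mul continuous_star continuous_id) continuous_const
    have h2 : IsClosed {M : Matrix n n ℂ | M * star M = 1} :=
      isClosed_eq (Continuous.matrix_mul continuous_id continuous_star) continuous_const
    have heq : (Matrix.unitaryGroup n ℂ : Set (Matrix n n ℂ))
        = {M | star M * M = 1} ∩ {M | M * star M = 1} := by
      ext M; exact Unitary.mem_iff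
    rw [heq]; exact h1.inter h2
  have hsub : (Matrix.unitaryGroup n ℂ : Set (Matrix n n ℂ)) ⊆
      Set.univ.pi fun _ : n => Set.univ.pi fun _ : n => Metric.closedBall (0 : ℂ) 1 := by
    intro U hU
    refine Set.mem_pi.mpr ?_
    intro i _
    rw [Set.mem_pi]
    intro j _
    rw [Metric.mem_closedBall, dist_zero_right]
    exact entry_norm_bound_of_unitary hU i j
  exact IsCompact.of_isClosed_subset
    (isCompact_univ_pi fun _ => isCompact_univ_pi fun _ => isCompact_closedBall _ _)
    hclosed hsub

/-- The Haar probability measure on the unitary group. -/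
def haarU : Measure (Matrix.unitaryGroup n ℂ) :=
  Measure.haarMeasure ⟨⟨Set.univ, isCompact_univ⟩, by simp⟩

end UnitaryTopology


section Defs

/-- Entrywise (Bochner) integral of a matrix-valued function. -/
def mInt {G : Type*} [MeasurableSpace G] (mu : Measure G) {m : Type*}
    (f : G → Matrix m m ℂ) : Matrix m m ℂ :=
  fun i j => ∫ U, f U i j ∂mu

/-- Partial trace over the first tensor factor. -/
def ptL {A B : Type*} [Fintype A] (M : Matrix (A × B) (A × B) ℂ) : Matrix B B ℂ :=
  fun i j => ∑ a, M (a, i) (a, j)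

/-- Partial trace over the second tensor factor. -/
def ptR {A B : Type*} [Fintype B] (M : Matrix (A × B) (A × B) ℂ) : Matrix A A ℂ :=
  fun i j => ∑ b, M (i, b) (j, b)

/-- Extension `T ⊗ id` of a superoperator to an additional tensor factor. -/
def matExt {A E R : Type*} (T : Matrix A A ℂ → Matrix E E ℂ)
    (M : Matrix (A × R) (A × R) ℂ) : Matrix (E × R) (E × R) ℂ :=
  fun p q => T (fun a b => M (a, p.2) (b, q.2)) p.1 q.1

/-- Linearity of a superoperator. -/
def IsLinMap {A E : Type*} (T : Matrix A A ℂ → Matrix E E ℂ) : Prop :=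
  ∀ (c : ℂ) (M N : Matrix A A ℂ), T (c • M + N) = c • T M + T N

/-- Complete positivity of a superoperator: it is linear and all its extensions by
finite-dimensional identities preserve positive semidefiniteness. -/
def IsCPMap {A E : Type*} [Fintype A] [Fintype E] (T : Matrix A A ℂ → Matrix E E ℂ) : Prop :=
  IsLinMap T ∧ ∀ (n : ℕ) (M : Matrix (A × Fin n) (A × Fin n) ℂ),
    M.PosSemidef → (matExt T M).PosSemidef

/-- Trace preservation. -/
def IsTPMap {A E : Type*} [Fintype A] [Fintype E] (T : Matrix A A ℂ → Matrix E E ℂ) : Prop :=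
  ∀ M : Matrix A A ℂ, (T M).trace = M.trace

/-- Spectral (Moore–Penrose) real power of a Hermitian matrix: the eigenvalue `λ` is mapped to
`λ ^ r` if `λ ≠ 0`, and to `0` otherwise.  Junk value `0` on non-Hermitian input. -/
def mpow {n : Type*} [Fintype n] [DecidableEq n] (M : Matrix n n ℂ) (r : ℝ) : Matrix n n ℂ :=
  if h : M.IsHermitian then
    (h.eigenvectorUnitary : Matrix n n ℂ) *
      Matrix.diagonal (fun i =>
        Complex.ofReal (if h.eigenvalues i = 0 then (0 : ℝ) else h.eigenvalues i ^ r)) *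
      star (h.eigenvectorUnitary : Matrix n n ℂ)
  else 0

/-- `ρ_δ`: the matrix obtained from a Hermitian matrix by zeroing out a maximal set of
smallest eigenvalues whose sum is at most `δ` (ties between equal eigenvalues broken by a
fixed enumeration of the index type).  Junk value `0` on non-Hermitian input. -/
def dTrunc {n : Type*} [Fintype n] [DecidableEq n] (M : Matrix n n ℂ) (δ : ℝ) :
    Matrix n n ℂ :=
  if h : M.IsHermitian then
    (h.eigenvectorUnitary : Matrix n n ℂ) *
      Matrix.diagonal (fun i =>
        if (∑ j ∈ Finset.univ.filter (fun j =>
              h.eigenvalues j < h.eigenvalues i ∨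
                (h.eigenvalues j = h.eigenvalues i ∧
                  Fintype.equivFin n j ≤ Fintype.equivFin n i)), h.eigenvalues j) ≤ δ
        then (0 : ℂ) else (h.eigenvalues i : ℂ)) *
      star (h.eigenvectorUnitary : Matrix n n ℂ)
  else 0

/-- Squared Schatten 2-norm `‖M‖₂² = Tr[MᴴM]`. -/
def sn2sq {n : Type*} [Fintype n] (M : Matrix n n ℂ) : ℝ := (Matrix.trace (Mᴴ * M)).re

/-- Trace norm `‖M‖₁ = Tr √(MᴴM)`. -/
def traceNorm {n : Type*} [Fintype n] [DecidableEq n] (M : Matrix n n ℂ) : ℝ :=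
  (Matrix.trace (mpow (Mᴴ * M) (1 / 2))).re

/-- The conditioned state `(I ⊗ (ρ^B_δ)^{-1/4}) ρ^{AB} (I ⊗ (ρ^B_δ)^{-1/4})`. -/
def tildeCond {A B : Type*} [Fintype A] [DecidableEq A] [Fintype B] [DecidableEq B]
    (ρ : Matrix (A × B) (A × B) ℂ) (δ : ℝ) : Matrix (A × B) (A × B) ℂ :=
  ((1 : Matrix A A ℂ) ⊗ₖ mpow (dTrunc (ptL ρ) δ) (-(1 / 4))) * ρ *
    ((1 : Matrix A A ℂ) ⊗ₖ mpow (dTrunc (ptL ρ) δ) (-(1 / 4)))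

/-- The δ-tilde conditional 2-entropy `H̃_{2,δ}(A|B)_ρ` of a state on `A ⊗ B`
(conditioning on the second factor). -/
def tildeH2 {A B : Type*} [Fintype A] [DecidableEq A] [Fintype B] [DecidableEq B]
    (ρ : Matrix (A × B) (A × B) ℂ) (δ : ℝ) : ℝ :=
  - Real.logb 2 ((Matrix.trace (tildeCond ρ δ * tildeCond ρ δ)).re)

/-- The unconditional tilde 2-entropy `H̃_2(A)_σ = -log Tr[σ²]`. -/
def h2un {A : Type*} [Fintype A] (σ : Matrix A A ℂ) : ℝ :=
  - Real.logb 2 ((Matrix.trace (σ * σ)).re)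

/-- The max entropy `H_max(A)_σ = 2 log Tr[√σ]`. -/
def hMax {A : Type*} [Fintype A] [DecidableEq A] (σ : Matrix A A ℂ) : ℝ :=
  2 * Real.logb 2 ((Matrix.trace (mpow σ (1 / 2))).re)

/-- The maximally entangled state `Φ^{AA'}`. -/
def maxEnt (A : Type*) [Fintype A] [DecidableEq A] : Matrix (A × A) (A × A) ℂ :=
  fun p q => if p.1 = p.2 ∧ q.1 = q.2 then (Fintype.card A : ℂ)⁻¹ else 0

/-- The swap operator `F^{AA'}`. -/
def swapOp (A : Type*) [DecidableEq A] : Matrix (A × A) (A × A) ℂ :=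
  fun p q => if p.1 = q.2 ∧ p.2 = q.1 then 1 else 0

/-- The Choi state of a superoperator, on `A ⊗ E`. -/
def choi {A E : Type*} [Fintype A] [DecidableEq A]
    (T : Matrix A A ℂ → Matrix E E ℂ) : Matrix (A × E) (A × E) ℂ :=
  fun p q => (Fintype.card A : ℂ)⁻¹ * T (Matrix.single p.1 q.1 1) p.2 q.2

/-- A (mixed) quantum state. -/
def IsState {A : Type*} [Fintype A] (ρ : Matrix A A ℂ) : Prop :=
  ρ.PosSemidef ∧ ρ.trace = 1

/-- A pure quantum state (rank-one projection). -/
def IsPureState {A : Type*} [Fintype A] (ψ : Matrix A A ℂ) : Prop :=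
  ψ.PosSemidef ∧ ψ * ψ = ψ ∧ ψ.trace = 1


/-- The Haar measure on the unitary group is a probability measure. -/
instance {n : Type*} [Fintype n] [DecidableEq n] : IsProbabilityMeasure (haarU n) :=
  ⟨Measure.haarMeasure_self⟩

/-- marginal over the middle factor: `((X × Y) × Z) ↦ (X × Z)`. -/
def m13 {X Y Z : Type*} [Fintype Y] (M : Matrix ((X × Y) × Z) ((X × Y) × Z) ℂ) :
    Matrix (X × Z) (X × Z) ℂ :=
  fun p q => ∑ y, M ((p.1, y), p.2) ((q.1, y), q.2)

/-- marginal over the first of three factors: `((X × Y) × Z) ↦ (Y × Z)`. -/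
def m23 {X Y Z : Type*} [Fintype X] (M : Matrix ((X × Y) × Z) ((X × Y) × Z) ℂ) :
    Matrix (Y × Z) (Y × Z) ℂ :=
  fun p q => ∑ x, M ((x, p.1), p.2) ((x, q.1), q.2)

/-- marginal over the first component of the second factor:
`(X × (Y × Z)) ↦ (X × Z)`. -/
def m2of2 {X Y Z : Type*} [Fintype Y] (M : Matrix (X × (Y × Z)) (X × (Y × Z)) ℂ) :
    Matrix (X × Z) (X × Z) ℂ :=
  fun p q => ∑ y, M (p.1, (y, p.2)) (q.1, (y, q.2))

/-- `(F^{AA'})^b`: the swap operator if `b = true`, the identity otherwise. -/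
def swapPow (A : Type*) [Fintype A] [DecidableEq A] (b : Bool) : Matrix (A × A) (A × A) ℂ :=
  if b then swapOp A else 1

/-- `I_S ⊗ V` for a rectangular matrix `V`. -/
def idTensor {S α β : Type*} [DecidableEq S] (V : Matrix α β ℂ) :
    Matrix (S × α) (S × β) ℂ := fun p q => if p.1 = q.1 then V p.2 q.2 else 0

/-- `Ω^{A'A''} ⊗ Δ^{B'B''}` rearranged as an operator on `(A''⊗B'') ⊗ (A'⊗B')`. -/
def pairState {A A' B B' : Type*} (Ω : Matrix (A' × A) (A' × A) ℂ)
    (Δ : Matrix (B' × B) (B' × B) ℂ) :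
    Matrix ((A × B) × (A' × B')) ((A × B) × (A' × B')) ℂ :=
  fun p q => Ω (p.2.1, p.1.1) (q.2.1, q.1.1) * Δ (p.2.2, p.1.2) (q.2.2, q.1.2)

/-- interleave two bipartite operators on `A⊗X` and `B⊗Y` as an operator on
`(A⊗B) ⊗ (X⊗Y)`. -/
def arrange2 {A B X Y : Type*} (M : Matrix (A × X) (A × X) ℂ) (N : Matrix (B × Y) (B × Y) ℂ) :
    Matrix ((A × B) × (X × Y)) ((A × B) × (X × Y)) ℂ :=
  fun p q => M (p.1.1, p.2.1) (q.1.1, q.2.1) * N (p.1.2, p.2.2) (q.1.2, q.2.2)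

/-- conjugate the first factor of a bipartite operator by a rectangular matrix `U : A → A'`. -/
def encApply {A A' X : Type*} [Fintype A] (U : Matrix A' A ℂ) (M : Matrix (A × X) (A × X) ℂ) :
    Matrix (A' × X) (A' × X) ℂ :=
  fun p q => ∑ a, ∑ a', U p.1 a * M (a, p.2) (a', q.2) * star (U q.1 a')

section Pi

variable {k : ℕ} {a : Fin k → Type*} [∀ i, Fintype (a i)] [∀ i, DecidableEq (a i)]

/-- Tensor product of `k` matrices. -/
def piKron (U : ∀ i, Matrix (a i) (a i) ℂ) : Matrix (∀ i, a i) (∀ i, a i) ℂ :=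
  fun f g => ∏ i, U i (f i) (g i)

/-- merge assignments on the `true` and `false` fibers of a bit string into a full assignment. -/
def bmerge (b : Fin k → Bool) (f : (i : {i // b i = true}) → a i.1)
    (g : (i : {i // b i = false}) → a i.1) (i : Fin k) : a i :=
  if h : b i = true then f ⟨i, h⟩ else g ⟨i, by simpa using h⟩

/-- marginal of an operator on `(⊗ᵢ Aᵢ) ⊗ E` on the subsystem
`(⊗_{i : bᵢ = 1} Aᵢ) ⊗ E` selected by a bit string `b`. -/
def margB {E : Type*} (b : Fin k → Bool)
    (M : Matrix ((∀ i, a i) × E) ((∀ i, a i) × E) ℂ) :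
    Matrix (((i : {i // b i = true}) → a i.1) × E) (((i : {i // b i = true}) → a i.1) × E) ℂ :=
  fun p q => ∑ g : (i : {i // b i = false}) → a i.1,
    M (bmerge b p.1 g, p.2) (bmerge b q.1 g, q.2)

/-- `⊗ᵢ (F^{AᵢAᵢ'})^{bᵢ}` as an operator on `(⊗ᵢAᵢ) ⊗ (⊗ᵢAᵢ')`. -/
def swapProd (b : Fin k → Bool) :
    Matrix ((∀ i, a i) × (∀ i, a i)) ((∀ i, a i) × (∀ i, a i)) ℂ :=
  fun p q => ∏ i, if b i
    then (if p.1 i = q.2 i ∧ p.2 i = q.1 i then (1 : ℂ) else 0)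
    else (if p.1 i = q.1 i ∧ p.2 i = q.2 i then (1 : ℂ) else 0)

end Pi

/-- Tensor product `S ⊗ T` of two superoperators. -/
def tensorSup {α β α' β' : Type*} [Fintype α] [DecidableEq α] [Fintype α'] [DecidableEq α']
    (S : Matrix α α ℂ → Matrix β β ℂ) (T : Matrix α' α' ℂ → Matrix β' β' ℂ)
    (M : Matrix (α × α') (α × α') ℂ) : Matrix (β × β') (β × β') ℂ :=
  fun p q => ∑ x : α, ∑ y : α, ∑ x' : α', ∑ y' : α',
    M (x, x') (y, y') * S (Matrix.single x y 1) p.1 q.1 *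
      T (Matrix.single x' y' 1) p.2 q.2

/-- Hilbert–Schmidt adjoint of a superoperator. -/
def hsAdj {A E : Type*} [Fintype A] [DecidableEq A] [Fintype E]
    (T : Matrix A A ℂ → Matrix E E ℂ) (Y : Matrix E E ℂ) : Matrix A A ℂ :=
  fun x y => star (Matrix.trace (Yᴴ * T (Matrix.single x y 1)))

end Defs

end QIT

section MyAux

open scoped ComplexConjugate

private lemma mysum_swap4 {ι κ : Type*} [Fintype ι] [Fintype κ] (F : ι → ι → κ → κ → ℂ) :
    ∑ x : ι, ∑ y : ι, ∑ b : κ, ∑ b' : κ, F x y b b'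
      = ∑ b : κ, ∑ b' : κ, ∑ x : ι, ∑ y : ι, F x y b b' := by
  calc ∑ x : ι, ∑ y : ι, ∑ b : κ, ∑ b' : κ, F x y b b'
      = ∑ x : ι, ∑ b : κ, ∑ y : ι, ∑ b' : κ, F x y b b' :=
        Finset.sum_congr rfl fun _ _ => Finset.sum_comm
    _ = ∑ b : κ, ∑ x : ι, ∑ y : ι, ∑ b' : κ, F x y b b' := Finset.sum_comm
    _ = ∑ b : κ, ∑ x : ι, ∑ b' : κ, ∑ y : ι, F x y b b' :=
        Finset.sum_congr rfl fun _ _ => Finset.sum_congr rfl fun _ _ => Finset.sum_comm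
    _ = ∑ b : κ, ∑ b' : κ, ∑ x : ι, ∑ y : ι, F x y b b' :=
        Finset.sum_congr rfl fun _ _ => Finset.sum_comm

private lemma mysum4 {ι κ : Type*} [Fintype ι] [Fintype κ] (α β γ δ : ι → κ → ℂ) :
    ∑ x : ι, ∑ y : ι, (∑ b : κ, α x b * β y b) * (∑ b : κ, γ x b * δ y b)
      = ∑ b : κ, ∑ b' : κ, (∑ x : ι, α x b * γ x b') * (∑ y : ι, β y b * δ y b') := by
  simp_rw [Fintype.sum_mul_sum]
  rw [mysum_swap4 (fun x y b b' => α x b * β y b * (γ x b' * δ y b'))]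
  refine Finset.sum_congr rfl fun b _ => Finset.sum_congr rfl fun b' _ =>
    Finset.sum_congr rfl fun x _ => Finset.sum_congr rfl fun y _ => by ring

private lemma myself_re {ι : Type*} [Fintype ι] (v : ι → ℂ) :
    (∑ i, v i * conj (v i)).re = ∑ i, ‖v i‖ ^ 2 := by
  rw [Complex.re_sum]
  refine Finset.sum_congr rfl fun i _ => ?_
  rw [Complex.mul_conj]
  simp [Complex.normSq_eq_norm_sq, ← Complex.ofReal_pow]

private lemma myself_nonneg {ι : Type*} [Fintype ι] (v : ι → ℂ) :
    0 ≤ (∑ i, v i * conj (v i)).re := by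
  rw [myself_re]; positivity

private lemma mycs {ι : Type*} [Fintype ι] (v w : ι → ℂ) :
    (∑ i, v i * conj (w i)).re ≤
      Real.sqrt ((∑ i, v i * conj (v i)).re) * Real.sqrt ((∑ i, w i * conj (w i)).re) := by
  rw [myself_re, myself_re, Complex.re_sum]
  have h1 : ∑ i, (v i * conj (w i)).re ≤ ∑ i, ‖v i‖ * ‖w i‖ := by
    refine Finset.sum_le_sum fun i _ => (Complex.re_le_norm _).trans ?_
    rw [norm_mul, Complex.norm_conj]
  refine h1.trans ?_
  have h2 := Finset.sum_mul_sq_le_sq_mul_sq Finset.univ (fun i => ‖v i‖) (fun i => ‖w i‖)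
  have hnn : (0:ℝ) ≤ ∑ i, ‖v i‖ * ‖w i‖ :=
    Finset.sum_nonneg fun i _ => mul_nonneg (norm_nonneg _) (norm_nonneg _)
  calc ∑ i, ‖v i‖ * ‖w i‖ = Real.sqrt ((∑ i, ‖v i‖ * ‖w i‖) ^ 2) := (Real.sqrt_sq hnn).symm
    _ ≤ Real.sqrt ((∑ i, ‖v i‖ ^ 2) * ∑ i, ‖w i‖ ^ 2) := Real.sqrt_le_sqrt h2
    _ = _ := Real.sqrt_mul (Finset.sum_nonneg fun i _ => sq_nonneg _) _

end MyAux

open QIT in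
/-- For a nonzero positive semidefinite `ρ^{AB}`,
`Tr[(ρ^B)²] ≤ |A|·Tr[(ρ^{AB})²]` and `Tr[(ρ^{AB})²] ≤ |A|·Tr[(ρ^B)²]`. -/
theorem marginal_purity_bounds {A B : Type*} [Fintype A] [Fintype B]
    (ρ : Matrix (A × B) (A × B) ℂ) (hρ : ρ.PosSemidef) (hne : ρ ≠ 0) :
    (Matrix.trace (ptL ρ * ptL ρ)).re ≤ (Fintype.card A : ℝ) * (Matrix.trace (ρ * ρ)).re ∧
    (Matrix.trace (ρ * ρ)).re ≤ (Fintype.card A : ℝ) * (Matrix.trace (ptL ρ * ptL ρ)).re := by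
  classical
  clear hne
  have hherm : ∀ p q : A × B, (starRingEnd ℂ) (ρ p q) = ρ q p := fun p q => hρ.isHermitian.apply q p
  open scoped MatrixOrder in
  set S : Matrix (A × B) (A × B) ℂ := CFC.sqrt ρ with hSdef
  open scoped MatrixOrder in
  have hSS : S * S = ρ := CFC.sqrt_mul_sqrt_self ρ hρ.nonneg
  open scoped MatrixOrder in
  have hSh : ∀ p q : A × B, (starRingEnd ℂ) (S p q) = S q p :=
    fun p q => (CFC.sqrt_nonneg ρ).posSemidef.isHermitian.apply q p
  have hrho : ∀ p q : A × B, ρ p q = ∑ x, (starRingEnd ℂ) (S x p) * S x q := by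
    intro p q
    rw [← hSS, Matrix.mul_apply]
    exact Finset.sum_congr rfl fun x _ => by rw [hSh x p]
  set Z : A → A → ((A × B) × (A × B)) → ℂ :=
    fun a a' p => ∑ b, S p.1 (a, b) * (starRingEnd ℂ) (S p.2 (a', b)) with hZ
  set t : A → A → ℝ :=
    fun a a' => (∑ q : B × B, ρ (a, q.1) (a', q.2) * (starRingEnd ℂ) (ρ (a, q.1) (a', q.2))).re with htdef
  set s : A → A → ℝ := fun a a' => (∑ p, Z a a' p * (starRingEnd ℂ) (Z a a' p)).re with hsdef
  have hZconj : ∀ (a a' : A) (p : (A × B) × (A × B)),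
      (starRingEnd ℂ) (Z a a' p) = ∑ b, (starRingEnd ℂ) (S p.1 (a, b)) * S p.2 (a', b) := by
    intro a a' p
    simp only [hZ, map_sum, _root_.map_mul, Complex.conj_conj]
  have hconjrho : ∀ p q : A × B, (starRingEnd ℂ) (ρ p q) = ∑ x, S x p * (starRingEnd ℂ) (S x q) := by
    intro p q
    rw [hrho p q, map_sum]
    exact Finset.sum_congr rfl fun x _ => by
      rw [_root_.map_mul, Complex.conj_conj, mul_comm]
  have hzr : ∀ a a' : A,
      (∑ p : (A × B) × (A × B), Z a a p * (starRingEnd ℂ) (Z a' a' p))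
        = ∑ q : B × B, ρ (a, q.1) (a', q.2) * (starRingEnd ℂ) (ρ (a, q.1) (a', q.2)) := by
    intro a a'
    calc ∑ p : (A × B) × (A × B), Z a a p * (starRingEnd ℂ) (Z a' a' p)
        = ∑ x : A × B, ∑ y : A × B, (∑ b, S x (a, b) * (starRingEnd ℂ) (S y (a, b))) *
            (∑ b, (starRingEnd ℂ) (S x (a', b)) * S y (a', b)) := by
          rw [Fintype.sum_prod_type]
          exact Finset.sum_congr rfl fun x _ => Finset.sum_congr rfl fun y _ => by
            rw [hZconj]
      _ = ∑ b : B, ∑ b' : B, (∑ x, S x (a, b) * (starRingEnd ℂ) (S x (a', b'))) *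
            (∑ y, (starRingEnd ℂ) (S y (a, b)) * S y (a', b')) :=
          mysum4 (fun x b => S x (a, b)) (fun y b => (starRingEnd ℂ) (S y (a, b)))
            (fun x b => (starRingEnd ℂ) (S x (a', b))) (fun y b => S y (a', b))
      _ = ∑ b : B, ∑ b' : B, (starRingEnd ℂ) (ρ (a, b) (a', b')) * ρ (a, b) (a', b') := by
          refine Finset.sum_congr rfl fun b _ => Finset.sum_congr rfl fun b' _ => ?_
          rw [← hrho, ← hconjrho]
      _ = ∑ q : B × B, ρ (a, q.1) (a', q.2) * (starRingEnd ℂ) (ρ (a, q.1) (a', q.2)) := by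
          rw [Fintype.sum_prod_type]
          exact Finset.sum_congr rfl fun b _ => Finset.sum_congr rfl fun b' _ => mul_comm _ _
  have hvz : ∀ a a' : A,
      (∑ q : B × B, ρ (a, q.1) (a, q.2) * (starRingEnd ℂ) (ρ (a', q.1) (a', q.2)))
        = ∑ p, Z a a' p * (starRingEnd ℂ) (Z a a' p) := by
    intro a a'
    calc ∑ q : B × B, ρ (a, q.1) (a, q.2) * (starRingEnd ℂ) (ρ (a', q.1) (a', q.2))
        = ∑ b : B, ∑ b' : B, ρ (a, b) (a, b') * ρ (a', b') (a', b) := by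
          rw [Fintype.sum_prod_type]
          exact Finset.sum_congr rfl fun b _ => Finset.sum_congr rfl fun b' _ => by
            rw [hherm]
      _ = ∑ b : B, ∑ b' : B, (starRingEnd ℂ) (ρ (a, b') (a, b)) * ρ (a', b') (a', b) :=
          Finset.sum_congr rfl fun b _ => Finset.sum_congr rfl fun b' _ => by
            rw [hherm]
      _ = ∑ b : B, ∑ b' : B, (starRingEnd ℂ) (ρ (a, b) (a, b')) * ρ (a', b) (a', b') :=
          Finset.sum_comm
      _ = ∑ x : A × B, ∑ y : A × B, (∑ b, S x (a, b) * (starRingEnd ℂ) (S y (a', b))) *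
            (∑ b, (starRingEnd ℂ) (S x (a, b)) * S y (a', b)) := by
          rw [mysum4 (fun x b => S x (a, b)) (fun y b => (starRingEnd ℂ) (S y (a', b)))
            (fun x b => (starRingEnd ℂ) (S x (a, b))) (fun y b => S y (a', b))]
          refine Finset.sum_congr rfl fun b _ => Finset.sum_congr rfl fun b' _ => ?_
          rw [← hrho, ← hconjrho]
      _ = ∑ p, Z a a' p * (starRingEnd ℂ) (Z a a' p) := by
          symm
          rw [Fintype.sum_prod_type]
          refine Finset.sum_congr rfl fun x _ => Finset.sum_congr rfl fun y _ => ?_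
          rw [hZconj]
  have htr : (Matrix.trace (ρ * ρ)).re = ∑ a, ∑ a', t a a' := by
    have h0 : Matrix.trace (ρ * ρ)
        = ∑ a, ∑ a', ∑ q : B × B, ρ (a, q.1) (a', q.2) * (starRingEnd ℂ) (ρ (a, q.1) (a', q.2)) := by
      calc Matrix.trace (ρ * ρ) = ∑ x : A × B, ∑ y : A × B, ρ x y * ρ y x := by
            simp [Matrix.trace, Matrix.mul_apply, Matrix.diag]
        _ = ∑ a, ∑ b, ∑ a', ∑ b', ρ (a, b) (a', b') * ρ (a', b') (a, b) := by
            rw [Fintype.sum_prod_type]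
            exact Finset.sum_congr rfl fun a _ => Finset.sum_congr rfl fun b _ =>
              Fintype.sum_prod_type _
        _ = ∑ a, ∑ a', ∑ b, ∑ b', ρ (a, b) (a', b') * ρ (a', b') (a, b) :=
            Finset.sum_congr rfl fun a _ => Finset.sum_comm
        _ = ∑ a, ∑ a', ∑ q : B × B, ρ (a, q.1) (a', q.2) * (starRingEnd ℂ) (ρ (a, q.1) (a', q.2)) := by
            refine Finset.sum_congr rfl fun a _ => Finset.sum_congr rfl fun a' _ => ?_
            rw [Fintype.sum_prod_type]
            exact Finset.sum_congr rfl fun b _ => Finset.sum_congr rfl fun b' _ => by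
              rw [hherm]
    rw [h0, Complex.re_sum]
    exact Finset.sum_congr rfl fun a _ => Complex.re_sum _ _
  have hpt : (Matrix.trace (ptL ρ * ptL ρ)).re = ∑ a, ∑ a', s a a' := by
    have h0 : Matrix.trace (ptL ρ * ptL ρ) = ∑ a, ∑ a', ∑ p, Z a a' p * (starRingEnd ℂ) (Z a a' p) := by
      calc Matrix.trace (ptL ρ * ptL ρ)
          = ∑ b : B, ∑ b' : B, (∑ a, ρ (a, b) (a, b')) * (∑ a', ρ (a', b') (a', b)) := by
            simp [Matrix.trace, Matrix.mul_apply, Matrix.diag, ptL]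
        _ = ∑ b : B, ∑ b' : B, ∑ a, ∑ a', ρ (a, b) (a, b') * ρ (a', b') (a', b) :=
            Finset.sum_congr rfl fun b _ => Finset.sum_congr rfl fun b' _ =>
              Fintype.sum_mul_sum _ _
        _ = ∑ a, ∑ a', ∑ b, ∑ b', ρ (a, b) (a, b') * ρ (a', b') (a', b) :=
            mysum_swap4 fun b b' a a' => ρ (a, b) (a, b') * ρ (a', b') (a', b)
        _ = ∑ a, ∑ a', ∑ q : B × B, ρ (a, q.1) (a, q.2) * (starRingEnd ℂ) (ρ (a', q.1) (a', q.2)) := by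
            refine Finset.sum_congr rfl fun a _ => Finset.sum_congr rfl fun a' _ => ?_
            rw [Fintype.sum_prod_type]
            exact Finset.sum_congr rfl fun b _ => Finset.sum_congr rfl fun b' _ => by
              rw [hherm]
        _ = ∑ a, ∑ a', ∑ p, Z a a' p * (starRingEnd ℂ) (Z a a' p) :=
            Finset.sum_congr rfl fun a _ => Finset.sum_congr rfl fun a' _ => hvz a a'
    rw [h0, Complex.re_sum]
    exact Finset.sum_congr rfl fun a _ => Complex.re_sum _ _
  have tnn : ∀ a a', 0 ≤ t a a' := fun a a' =>
    myself_nonneg fun q : B × B => ρ (a, q.1) (a', q.2)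
  have snn : ∀ a a', 0 ≤ s a a' := fun a a' => myself_nonneg (Z a a')
  have hdiag : ∀ a, t a a = s a a := fun a => congrArg Complex.re (hzr a a).symm
  have tcs : ∀ a a', t a a' ≤ Real.sqrt (s a a) * Real.sqrt (s a' a') := by
    intro a a'
    have h1 : t a a' = (∑ p, Z a a p * (starRingEnd ℂ) (Z a' a' p)).re :=
      (congrArg Complex.re (hzr a a')).symm
    rw [h1]
    exact mycs (Z a a) (Z a' a')
  have scs : ∀ a a', s a a' ≤ Real.sqrt (s a a) * Real.sqrt (s a' a') := by
    intro a a'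
    have h1 : s a a' = (∑ q : B × B, ρ (a, q.1) (a, q.2) * (starRingEnd ℂ) (ρ (a', q.1) (a', q.2))).re :=
      (congrArg Complex.re (hvz a a')).symm
    rw [h1]
    have h2 := mycs (fun q : B × B => ρ (a, q.1) (a, q.2))
      (fun q : B × B => ρ (a', q.1) (a', q.2))
    refine h2.trans (le_of_eq ?_)
    rw [congrArg Complex.re (hvz a a), congrArg Complex.re (hvz a' a')]
  set E : ℝ := ∑ a, Real.sqrt (s a a) with hE
  have hEt : ∑ a, ∑ a', t a a' ≤ E ^ 2 := by
    calc ∑ a, ∑ a', t a a' ≤ ∑ a, ∑ a', Real.sqrt (s a a) * Real.sqrt (s a' a') :=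
          Finset.sum_le_sum fun a _ => Finset.sum_le_sum fun a' _ => tcs a a'
      _ = E * E := (Fintype.sum_mul_sum _ _).symm
      _ = E ^ 2 := (sq E).symm
  have hEs : ∑ a, ∑ a', s a a' ≤ E ^ 2 := by
    calc ∑ a, ∑ a', s a a' ≤ ∑ a, ∑ a', Real.sqrt (s a a) * Real.sqrt (s a' a') :=
          Finset.sum_le_sum fun a _ => Finset.sum_le_sum fun a' _ => scs a a'
      _ = E * E := (Fintype.sum_mul_sum _ _).symm
      _ = E ^ 2 := (sq E).symm
  have hEcard : E ^ 2 ≤ (Fintype.card A : ℝ) * ∑ a, s a a := by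
    have h := sq_sum_le_card_mul_sum_sq (s := (Finset.univ : Finset A))
      (f := fun a => Real.sqrt (s a a))
    rw [Finset.card_univ] at h
    refine h.trans (le_of_eq ?_)
    congr 1
    exact Finset.sum_congr rfl fun a _ => Real.sq_sqrt (snn a a)
  have hds : ∑ a, s a a ≤ ∑ a, ∑ a', s a a' :=
    Finset.sum_le_sum fun a _ =>
      Finset.single_le_sum (fun a' _ => snn a a') (Finset.mem_univ a)
  have hdt : ∑ a, s a a ≤ ∑ a, ∑ a', t a a' := by
    refine le_trans (le_of_eq ?_) (Finset.sum_le_sum fun a _ =>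
      Finset.single_le_sum (f := fun a' => t a a') (fun a' _ => tnn a a') (Finset.mem_univ a))
    exact Finset.sum_congr rfl fun a _ => (hdiag a).symm
  have hcard0 : (0:ℝ) ≤ (Fintype.card A : ℝ) := Nat.cast_nonneg _
  constructor
  · rw [hpt, htr]
    calc ∑ a, ∑ a', s a a' ≤ E ^ 2 := hEs
      _ ≤ (Fintype.card A : ℝ) * ∑ a, s a a := hEcard
      _ ≤ (Fintype.card A : ℝ) * ∑ a, ∑ a', t a a' := mul_le_mul_of_nonneg_left hdt hcard0
  · rw [hpt, htr]
    calc ∑ a, ∑ a', t a a' ≤ E ^ 2 := hEt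
      _ ≤ (Fintype.card A : ℝ) * ∑ a, s a a := hEcard
      _ ≤ (Fintype.card A : ℝ) * ∑ a, ∑ a', s a a' := mul_le_mul_of_nonneg_left hds hcard0
end
end

section
/- (Weighted Cauchy–Schwarz bound for the trace norm.) Let M be a linear operator and σ a positive semidefinite operator on a finite-dimensional complex Hilbert space A, and suppose the support of σ contains the column space of M and the column space of M†. Then ‖M‖₁ ≤ √( Tr[σ] · Tr[σ^{-1/4} M σ^{-1/2} M† σ^{-1/4}] ). In particular, if M is Hermitian (with support contained in the support of σ), then ‖M‖₁ ≤ √( Tr[σ] · Tr[(σ^{-1/4} M σ^{-1/4})²] ). -/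
open scoped Kronecker ComplexOrder
open MeasureTheory Matrix

noncomputable section

section WCSauxSection
namespace WCSaux
open QIT Matrix
open scoped ComplexOrder

variable {A : Type*} [Fintype A] [DecidableEq A]

lemma mpow_spec {σ : Matrix A A ℂ} (h : σ.IsHermitian) (r : ℝ) :
    mpow σ r = (h.eigenvectorUnitary : Matrix A A ℂ) *
      Matrix.diagonal (fun i =>
        Complex.ofReal (if h.eigenvalues i = 0 then (0 : ℝ) else h.eigenvalues i ^ r)) *
      star (h.eigenvectorUnitary : Matrix A A ℂ) := dif_pos h

lemma mpow_psd {σ : Matrix A A ℂ} (hσ : σ.PosSemidef) (r : ℝ) :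
    (mpow σ r).PosSemidef := by
  rw [mpow_spec hσ.1 r]
  have hd : (Matrix.diagonal (fun i =>
      Complex.ofReal (if hσ.1.eigenvalues i = 0 then (0 : ℝ)
        else hσ.1.eigenvalues i ^ r))).PosSemidef := by
    rw [Matrix.posSemidef_diagonal_iff]
    intro i
    split_ifs with h
    · simp
    · exact_mod_cast Complex.zero_le_real.mpr (Real.rpow_nonneg (hσ.eigenvalues_nonneg i) r)
  simpa [Matrix.star_eq_conjTranspose] using
    hd.mul_mul_conjTranspose_same (hσ.1.eigenvectorUnitary : Matrix A A ℂ)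

lemma mpow_mul {σ : Matrix A A ℂ} (hσ : σ.PosSemidef) (a b : ℝ) :
    mpow σ a * mpow σ b = mpow σ (a + b) := by
  have hV : star (hσ.1.eigenvectorUnitary : Matrix A A ℂ) *
      (hσ.1.eigenvectorUnitary : Matrix A A ℂ) = 1 :=
    (Unitary.mem_iff.mp (hσ.1.eigenvectorUnitary).2).1
  rw [mpow_spec hσ.1 a, mpow_spec hσ.1 b, mpow_spec hσ.1 (a + b)]
  simp only [Matrix.mul_assoc]
  rw [← Matrix.mul_assoc (star (hσ.1.eigenvectorUnitary : Matrix A A ℂ))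
    (hσ.1.eigenvectorUnitary : Matrix A A ℂ), hV, Matrix.one_mul,
    ← Matrix.mul_assoc (Matrix.diagonal _) (Matrix.diagonal _), Matrix.diagonal_mul_diagonal]
  have hfg : (fun i => Complex.ofReal
        (if hσ.1.eigenvalues i = 0 then (0 : ℝ) else hσ.1.eigenvalues i ^ a) *
      Complex.ofReal
        (if hσ.1.eigenvalues i = 0 then (0 : ℝ) else hσ.1.eigenvalues i ^ b))
      = fun i => Complex.ofReal
        (if hσ.1.eigenvalues i = 0 then (0 : ℝ) else hσ.1.eigenvalues i ^ (a + b)) := by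
    funext i
    by_cases h : hσ.1.eigenvalues i = 0
    · simp [h]
    · have hpos : 0 < hσ.1.eigenvalues i :=
        lt_of_le_of_ne (hσ.eigenvalues_nonneg i) (Ne.symm h)
      simp only [h, if_false, ← Complex.ofReal_mul, ← Real.rpow_add hpos]
  rw [hfg]

lemma mpow_one {σ : Matrix A A ℂ} (hσ : σ.PosSemidef) : mpow σ 1 = σ := by
  rw [mpow_spec hσ.1 1]
  conv_rhs => rw [hσ.1.spectral_theorem]
  congr 2
  congr 1
  funext i
  by_cases hi : hσ.1.eigenvalues i = 0 <;>
    simp [hi, Real.rpow_one, Function.comp]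

lemma trace_form (X Y : Matrix A A ℂ) :
    Matrix.trace (Xᴴ * Y) = ∑ p : A × A, (starRingEnd ℂ) (X p.1 p.2) * Y p.1 p.2 := by
  rw [Fintype.sum_prod_type, Matrix.trace]
  simp only [Matrix.diag, Matrix.mul_apply, Matrix.conjTranspose_apply, Complex.star_def]
  exact Finset.sum_comm

lemma trace_self_re (Z : Matrix A A ℂ) :
    (Matrix.trace (Zᴴ * Z)).re = ∑ p : A × A, ‖Z p.1 p.2‖ ^ 2 := by
  rw [trace_form, Complex.re_sum]
  refine Finset.sum_congr rfl fun p _ => ?_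
  rw [mul_comm, Complex.mul_conj, Complex.ofReal_re, Complex.normSq_eq_norm_sq]

lemma trace_self_re_nonneg (Z : Matrix A A ℂ) : 0 ≤ (Matrix.trace (Zᴴ * Z)).re := by
  rw [trace_self_re]; positivity

lemma trace_cs (X Y : Matrix A A ℂ) :
    ‖Matrix.trace (Xᴴ * Y)‖ ≤
      Real.sqrt ((Matrix.trace (Xᴴ * X)).re * (Matrix.trace (Yᴴ * Y)).re) := by
  let x : EuclideanSpace ℂ (A × A) := WithLp.toLp 2 (fun p : A × A => X p.1 p.2)
  let y : EuclideanSpace ℂ (A × A) := WithLp.toLp 2 (fun p : A × A => Y p.1 p.2)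
  have hinner : Matrix.trace (Xᴴ * Y) = inner ℂ x y := by
    rw [trace_form]
    simp [x, y, PiLp.inner_apply, RCLike.inner_apply]
    exact Finset.sum_congr rfl fun p _ => mul_comm _ _
  have hx : (Matrix.trace (Xᴴ * X)).re = ∑ p : A × A, ‖x p‖ ^ 2 := trace_self_re X
  have hy : (Matrix.trace (Yᴴ * Y)).re = ∑ p : A × A, ‖y p‖ ^ 2 := trace_self_re Y
  calc ‖Matrix.trace (Xᴴ * Y)‖ = ‖(inner ℂ x y : ℂ)‖ := by
        rw [hinner]
    _ ≤ ‖x‖ * ‖y‖ := norm_inner_le_norm x y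
    _ = Real.sqrt ((Matrix.trace (Xᴴ * X)).re * (Matrix.trace (Yᴴ * Y)).re) := by
        rw [EuclideanSpace.norm_eq, EuclideanSpace.norm_eq, hx, hy,
          ← Real.sqrt_mul (by positivity)]

end WCSaux
end WCSauxSection

open QIT in
/-- Weighted Cauchy–Schwarz bound for the trace norm:
if the support of the positive semidefinite `σ` contains the column spaces of `M` and `Mᴴ`
(expressed via the support projection `σ⁰ = mpow σ 0`), then
`‖M‖₁ ≤ √(Tr[σ]·Tr[σ^{-1/4} M σ^{-1/2} Mᴴ σ^{-1/4}])`, and if moreover `M` is Hermitian then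
`‖M‖₁ ≤ √(Tr[σ]·Tr[(σ^{-1/4} M σ^{-1/4})²])`. -/
theorem weighted_cauchy_schwarz_trace_norm {A : Type*} [Fintype A] [DecidableEq A]
    (M σ : Matrix A A ℂ) (hσ : σ.PosSemidef)
    (hsupp : mpow σ 0 * M = M) (hsupp' : mpow σ 0 * Mᴴ = Mᴴ) :
    traceNorm M ≤ Real.sqrt ((Matrix.trace σ).re *
        (Matrix.trace (mpow σ (-(1/4)) * M * mpow σ (-(1/2)) * Mᴴ * mpow σ (-(1/4)))).re) ∧
      (M.IsHermitian → traceNorm M ≤ Real.sqrt ((Matrix.trace σ).re *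
        (Matrix.trace ((mpow σ (-(1/4)) * M * mpow σ (-(1/4))) *
          (mpow σ (-(1/4)) * M * mpow σ (-(1/4))))).re)) := by
  have hP : (Mᴴ * M).PosSemidef := Matrix.posSemidef_conjTranspose_mul_self M
  have hσH : ∀ r : ℝ, (mpow σ r)ᴴ = mpow σ r := fun r => (WCSaux.mpow_psd hσ r).1
  have hPH : ∀ r : ℝ, (mpow (Mᴴ * M) r)ᴴ = mpow (Mᴴ * M) r := fun r => (WCSaux.mpow_psd hP r).1
  have huv : mpow σ (1/4) * mpow σ (-(1/4)) = mpow σ 0 := by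
    rw [WCSaux.mpow_mul hσ]; norm_num
  have hvu : mpow σ (-(1/4)) * mpow σ (1/4) = mpow σ 0 := by
    rw [WCSaux.mpow_mul hσ]; norm_num
  have hvv : mpow σ (-(1/4)) * mpow σ (-(1/4)) = mpow σ (-(1/2)) := by
    rw [WCSaux.mpow_mul hσ]; norm_num
  have huu : mpow σ (1/4) * mpow σ (1/4) = mpow σ (1/2) := by
    rw [WCSaux.mpow_mul hσ]; norm_num
  have hww : mpow σ (1/2) * mpow σ (1/2) = σ := by
    rw [WCSaux.mpow_mul hσ]
    have h : (1/2 : ℝ) + 1/2 = 1 := by norm_num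
    rw [h, WCSaux.mpow_one hσ]
  have hMQ : M * mpow σ 0 = M := by
    have h := congrArg Matrix.conjTranspose hsupp'
    simpa [Matrix.conjTranspose_mul, hσH 0] using h
  have hpm : mpow (Mᴴ * M) (-(1/2)) * (Mᴴ * M) = mpow (Mᴴ * M) (1/2) := by
    calc mpow (Mᴴ * M) (-(1/2)) * (Mᴴ * M)
        = mpow (Mᴴ * M) (-(1/2)) * mpow (Mᴴ * M) 1 := by rw [WCSaux.mpow_one hP]
      _ = mpow (Mᴴ * M) (1/2) := by rw [WCSaux.mpow_mul hP]; norm_num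
  have hRR : mpow (Mᴴ * M) 0 * mpow (Mᴴ * M) 0 = mpow (Mᴴ * M) 0 := by
    rw [WCSaux.mpow_mul hP]; norm_num
  set W : Matrix A A ℂ := M * mpow (Mᴴ * M) (-(1/2)) with hWdef
  have hWH : Wᴴ = mpow (Mᴴ * M) (-(1/2)) * Mᴴ := by
    rw [hWdef, Matrix.conjTranspose_mul, hPH]
  have hWHM : Wᴴ * M = mpow (Mᴴ * M) (1/2) := by
    rw [hWH, Matrix.mul_assoc, hpm]
  have hWW : Wᴴ * W = mpow (Mᴴ * M) 0 := by
    rw [hWdef, Matrix.conjTranspose_mul, hPH, ← Matrix.mul_assoc,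
      Matrix.mul_assoc (mpow (Mᴴ * M) (-(1/2))) Mᴴ M, hpm, WCSaux.mpow_mul hP]
    norm_num
  -- X := u * W * u, N := v * M * v
  have hXH : (mpow σ (1/4) * W * mpow σ (1/4))ᴴ = mpow σ (1/4) * Wᴴ * mpow σ (1/4) := by
    simp [Matrix.conjTranspose_mul, hσH, Matrix.mul_assoc]
  have E1 : Matrix.trace ((mpow σ (1/4) * W * mpow σ (1/4))ᴴ *
      (mpow σ (-(1/4)) * M * mpow σ (-(1/4)))) = Matrix.trace (mpow (Mᴴ * M) (1/2)) := by
    rw [hXH]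
    have step1 : mpow σ (1/4) * Wᴴ * mpow σ (1/4) *
        (mpow σ (-(1/4)) * M * mpow σ (-(1/4)))
        = mpow σ (1/4) * (Wᴴ * (M * mpow σ (-(1/4)))) := by
      simp only [Matrix.mul_assoc]
      rw [← Matrix.mul_assoc (mpow σ (1/4)) (mpow σ (-(1/4))), huv,
        ← Matrix.mul_assoc (mpow σ 0) M, hsupp]
    rw [step1, Matrix.trace_mul_comm (mpow σ (1/4)) (Wᴴ * (M * mpow σ (-(1/4)))),
      Matrix.mul_assoc Wᴴ (M * mpow σ (-(1/4))) (mpow σ (1/4)),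
      Matrix.mul_assoc M (mpow σ (-(1/4))) (mpow σ (1/4)), hvu, hMQ, hWHM]
  have E4 : Matrix.trace ((mpow σ (-(1/4)) * M * mpow σ (-(1/4)))ᴴ *
      (mpow σ (-(1/4)) * M * mpow σ (-(1/4))))
      = Matrix.trace (mpow σ (-(1/4)) * M * mpow σ (-(1/2)) * Mᴴ * mpow σ (-(1/4))) := by
    have hNH : (mpow σ (-(1/4)) * M * mpow σ (-(1/4)))ᴴ
        = mpow σ (-(1/4)) * Mᴴ * mpow σ (-(1/4)) := by
      simp [Matrix.conjTranspose_mul, hσH, Matrix.mul_assoc]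
    have hmat : (mpow σ (-(1/4)) * M * mpow σ (-(1/4))) *
        (mpow σ (-(1/4)) * Mᴴ * mpow σ (-(1/4)))
        = mpow σ (-(1/4)) * M * mpow σ (-(1/2)) * Mᴴ * mpow σ (-(1/4)) := by
      simp only [Matrix.mul_assoc]
      rw [← Matrix.mul_assoc (mpow σ (-(1/4))) (mpow σ (-(1/4))), hvv]
    rw [hNH, Matrix.trace_mul_comm, hmat]
  -- E2 : Tr[XᴴX].re ≤ Tr[σ].re
  have E2c : Matrix.trace ((mpow σ (1/2))ᴴ * mpow σ (1/2)) = Matrix.trace σ := by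
    rw [hσH, hww]
  have hs0 : 0 ≤ (Matrix.trace σ).re := by
    have h := WCSaux.trace_self_re_nonneg (mpow σ (1/2))
    rw [hσH, hww] at h
    exact h
  have E2a : Matrix.trace ((mpow σ (1/4) * W * mpow σ (1/4))ᴴ *
      (mpow σ (1/4) * W * mpow σ (1/4)))
      = Matrix.trace ((mpow σ (1/2))ᴴ * (W * mpow σ (1/2) * Wᴴ)) := by
    rw [hXH, hσH]
    have s1 : mpow σ (1/4) * Wᴴ * mpow σ (1/4) * (mpow σ (1/4) * W * mpow σ (1/4))
        = mpow σ (1/4) * (Wᴴ * (mpow σ (1/2) * (W * mpow σ (1/4)))) := by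
      simp only [Matrix.mul_assoc]
      rw [← Matrix.mul_assoc (mpow σ (1/4)) (mpow σ (1/4)), huu]
    rw [s1, Matrix.trace_mul_comm (mpow σ (1/4)) (Wᴴ * (mpow σ (1/2) * (W * mpow σ (1/4)))),
      Matrix.mul_assoc Wᴴ (mpow σ (1/2) * (W * mpow σ (1/4))) (mpow σ (1/4)),
      Matrix.trace_mul_comm Wᴴ (mpow σ (1/2) * (W * mpow σ (1/4)) * mpow σ (1/4))]
    have hmat2 : mpow σ (1/2) * (W * mpow σ (1/4)) * mpow σ (1/4) * Wᴴ
        = mpow σ (1/2) * (W * mpow σ (1/2) * Wᴴ) := by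
      simp only [Matrix.mul_assoc]
      rw [← Matrix.mul_assoc (mpow σ (1/4)) (mpow σ (1/4)) Wᴴ, huu]
    rw [hmat2]
  have hBH : (W * mpow σ (1/2) * Wᴴ)ᴴ = W * mpow σ (1/2) * Wᴴ := by
    simp [Matrix.conjTranspose_mul, hσH, Matrix.mul_assoc]
  have E2d1 : Matrix.trace ((W * mpow σ (1/2) * Wᴴ)ᴴ * (W * mpow σ (1/2) * Wᴴ))
      = Matrix.trace (mpow σ (1/2) * (mpow (Mᴴ * M) 0 * (mpow σ (1/2) * mpow (Mᴴ * M) 0))) := by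
    rw [hBH]
    have s1 : W * mpow σ (1/2) * Wᴴ * (W * mpow σ (1/2) * Wᴴ)
        = W * (mpow σ (1/2) * (mpow (Mᴴ * M) 0 * (mpow σ (1/2) * Wᴴ))) := by
      simp only [Matrix.mul_assoc]
      rw [← Matrix.mul_assoc Wᴴ W, hWW]
    have hmat3 : mpow σ (1/2) * (mpow (Mᴴ * M) 0 * (mpow σ (1/2) * Wᴴ)) * W
        = mpow σ (1/2) * (mpow (Mᴴ * M) 0 * (mpow σ (1/2) * mpow (Mᴴ * M) 0)) := by
      simp only [Matrix.mul_assoc]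
      rw [hWW]
    rw [s1, Matrix.trace_mul_comm W (mpow σ (1/2) * (mpow (Mᴴ * M) 0 * (mpow σ (1/2) * Wᴴ))),
      hmat3]
  have h1mRH : (1 - mpow (Mᴴ * M) 0)ᴴ = 1 - mpow (Mᴴ * M) 0 := by
    simp [Matrix.conjTranspose_sub, hPH]
  have h1mR2 : (1 - mpow (Mᴴ * M) 0) * (1 - mpow (Mᴴ * M) 0) = 1 - mpow (Mᴴ * M) 0 := by
    rw [sub_mul, one_mul, mul_sub, mul_one, hRR, sub_self, sub_zero]
  -- F1
  have F1 : (Matrix.trace (mpow σ (1/2) * (mpow (Mᴴ * M) 0 *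
        (mpow σ (1/2) * mpow (Mᴴ * M) 0)))).re
      ≤ (Matrix.trace (mpow σ (1/2) * (mpow (Mᴴ * M) 0 * mpow σ (1/2)))).re := by
    have hC : (mpow (Mᴴ * M) 0 * mpow σ (1/2) * (1 - mpow (Mᴴ * M) 0))ᴴ *
        (mpow (Mᴴ * M) 0 * mpow σ (1/2) * (1 - mpow (Mᴴ * M) 0))
        = (1 - mpow (Mᴴ * M) 0) * (mpow σ (1/2) * (mpow (Mᴴ * M) 0 *
            (mpow σ (1/2) * (1 - mpow (Mᴴ * M) 0)))) := by
      simp only [Matrix.conjTranspose_mul, h1mRH, hσH, hPH, Matrix.mul_assoc]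
      rw [← Matrix.mul_assoc (mpow (Mᴴ * M) 0) (mpow (Mᴴ * M) 0), hRR]
    have key : Matrix.trace (mpow σ (1/2) * (mpow (Mᴴ * M) 0 * mpow σ (1/2)))
        - Matrix.trace (mpow σ (1/2) * (mpow (Mᴴ * M) 0 * (mpow σ (1/2) * mpow (Mᴴ * M) 0)))
        = Matrix.trace ((mpow (Mᴴ * M) 0 * mpow σ (1/2) * (1 - mpow (Mᴴ * M) 0))ᴴ *
            (mpow (Mᴴ * M) 0 * mpow σ (1/2) * (1 - mpow (Mᴴ * M) 0))) := by
      rw [hC, Matrix.trace_mul_comm (1 - mpow (Mᴴ * M) 0)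
        (mpow σ (1/2) * (mpow (Mᴴ * M) 0 * (mpow σ (1/2) * (1 - mpow (Mᴴ * M) 0))))]
      have expand : mpow σ (1/2) * (mpow (Mᴴ * M) 0 *
          (mpow σ (1/2) * (1 - mpow (Mᴴ * M) 0))) * (1 - mpow (Mᴴ * M) 0)
          = mpow σ (1/2) * (mpow (Mᴴ * M) 0 * mpow σ (1/2))
            - mpow σ (1/2) * (mpow (Mᴴ * M) 0 * (mpow σ (1/2) * mpow (Mᴴ * M) 0)) := by
        calc mpow σ (1/2) * (mpow (Mᴴ * M) 0 *
              (mpow σ (1/2) * (1 - mpow (Mᴴ * M) 0))) * (1 - mpow (Mᴴ * M) 0)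
            = mpow σ (1/2) * (mpow (Mᴴ * M) 0 * (mpow σ (1/2) *
              ((1 - mpow (Mᴴ * M) 0) * (1 - mpow (Mᴴ * M) 0)))) := by
              simp only [Matrix.mul_assoc]
          _ = mpow σ (1/2) * (mpow (Mᴴ * M) 0 * (mpow σ (1/2) *
              (1 - mpow (Mᴴ * M) 0))) := by rw [h1mR2]
          _ = _ := by simp only [Matrix.mul_sub, Matrix.mul_one]
      rw [expand, Matrix.trace_sub]
    have hnn := WCSaux.trace_self_re_nonneg (mpow (Mᴴ * M) 0 * mpow σ (1/2) * (1 - mpow (Mᴴ * M) 0))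
    rw [← key, Complex.sub_re] at hnn
    linarith
  -- F2
  have F2 : (Matrix.trace (mpow σ (1/2) * (mpow (Mᴴ * M) 0 * mpow σ (1/2)))).re
      ≤ (Matrix.trace σ).re := by
    have hC : ((1 - mpow (Mᴴ * M) 0) * mpow σ (1/2))ᴴ * ((1 - mpow (Mᴴ * M) 0) * mpow σ (1/2))
        = mpow σ (1/2) * ((1 - mpow (Mᴴ * M) 0) * mpow σ (1/2)) := by
      simp only [Matrix.conjTranspose_mul, h1mRH, hσH, Matrix.mul_assoc]
      rw [← Matrix.mul_assoc (1 - mpow (Mᴴ * M) 0) (1 - mpow (Mᴴ * M) 0), h1mR2]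
    have key : Matrix.trace σ
        - Matrix.trace (mpow σ (1/2) * (mpow (Mᴴ * M) 0 * mpow σ (1/2)))
        = Matrix.trace (((1 - mpow (Mᴴ * M) 0) * mpow σ (1/2))ᴴ *
            ((1 - mpow (Mᴴ * M) 0) * mpow σ (1/2))) := by
      rw [hC]
      have expand : mpow σ (1/2) * ((1 - mpow (Mᴴ * M) 0) * mpow σ (1/2))
          = σ - mpow σ (1/2) * (mpow (Mᴴ * M) 0 * mpow σ (1/2)) := by
        rw [sub_mul, one_mul, Matrix.mul_sub, ← Matrix.mul_assoc, hww, Matrix.mul_assoc]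
      rw [expand, Matrix.trace_sub]
    have hnn := WCSaux.trace_self_re_nonneg ((1 - mpow (Mᴴ * M) 0) * mpow σ (1/2))
    rw [← key, Complex.sub_re] at hnn
    linarith
  have E2 : (Matrix.trace ((mpow σ (1/4) * W * mpow σ (1/4))ᴴ *
      (mpow σ (1/4) * W * mpow σ (1/4)))).re ≤ (Matrix.trace σ).re := by
    have hb : (Matrix.trace ((W * mpow σ (1/2) * Wᴴ)ᴴ * (W * mpow σ (1/2) * Wᴴ))).re
        ≤ (Matrix.trace σ).re := by
      rw [E2d1]
      exact le_trans F1 F2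
    have hb0 := WCSaux.trace_self_re_nonneg (W * mpow σ (1/2) * Wᴴ)
    calc (Matrix.trace ((mpow σ (1/4) * W * mpow σ (1/4))ᴴ *
          (mpow σ (1/4) * W * mpow σ (1/4)))).re
        = (Matrix.trace ((mpow σ (1/2))ᴴ * (W * mpow σ (1/2) * Wᴴ))).re := by rw [E2a]
      _ ≤ ‖Matrix.trace ((mpow σ (1/2))ᴴ * (W * mpow σ (1/2) * Wᴴ))‖ :=
          Complex.re_le_norm _
      _ ≤ Real.sqrt ((Matrix.trace ((mpow σ (1/2))ᴴ * mpow σ (1/2))).re *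
            (Matrix.trace ((W * mpow σ (1/2) * Wᴴ)ᴴ * (W * mpow σ (1/2) * Wᴴ))).re) :=
          WCSaux.trace_cs _ _
      _ ≤ Real.sqrt ((Matrix.trace σ).re * (Matrix.trace σ).re) := by
          apply Real.sqrt_le_sqrt
          rw [E2c]
          exact mul_le_mul_of_nonneg_left hb hs0
      _ = (Matrix.trace σ).re := Real.sqrt_mul_self hs0
  -- main bound
  have key : traceNorm M ≤ Real.sqrt ((Matrix.trace σ).re *
      (Matrix.trace (mpow σ (-(1/4)) * M * mpow σ (-(1/2)) * Mᴴ * mpow σ (-(1/4)))).re) := by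
    have hN0 := WCSaux.trace_self_re_nonneg (mpow σ (-(1/4)) * M * mpow σ (-(1/4)))
    calc traceNorm M = (Matrix.trace (mpow (Mᴴ * M) (1/2))).re := rfl
      _ = (Matrix.trace ((mpow σ (1/4) * W * mpow σ (1/4))ᴴ *
            (mpow σ (-(1/4)) * M * mpow σ (-(1/4))))).re := by rw [E1]
      _ ≤ ‖Matrix.trace ((mpow σ (1/4) * W * mpow σ (1/4))ᴴ *
            (mpow σ (-(1/4)) * M * mpow σ (-(1/4))))‖ := Complex.re_le_norm _
      _ ≤ Real.sqrt ((Matrix.trace ((mpow σ (1/4) * W * mpow σ (1/4))ᴴ *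
              (mpow σ (1/4) * W * mpow σ (1/4)))).re *
            (Matrix.trace ((mpow σ (-(1/4)) * M * mpow σ (-(1/4)))ᴴ *
              (mpow σ (-(1/4)) * M * mpow σ (-(1/4))))).re) := WCSaux.trace_cs _ _
      _ ≤ Real.sqrt ((Matrix.trace σ).re *
            (Matrix.trace ((mpow σ (-(1/4)) * M * mpow σ (-(1/4)))ᴴ *
              (mpow σ (-(1/4)) * M * mpow σ (-(1/4))))).re) := by
          apply Real.sqrt_le_sqrt
          exact mul_le_mul_of_nonneg_right E2 hN0
      _ = Real.sqrt ((Matrix.trace σ).re *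
            (Matrix.trace (mpow σ (-(1/4)) * M * mpow σ (-(1/2)) * Mᴴ * mpow σ (-(1/4)))).re) := by
          rw [E4]
  refine ⟨key, fun hM => ?_⟩
  have hMM : Mᴴ = M := hM
  have hid : mpow σ (-(1/4)) * M * mpow σ (-(1/2)) * Mᴴ * mpow σ (-(1/4))
      = (mpow σ (-(1/4)) * M * mpow σ (-(1/4))) * (mpow σ (-(1/4)) * M * mpow σ (-(1/4))) := by
    rw [hMM]
    simp only [Matrix.mul_assoc]
    rw [← Matrix.mul_assoc (mpow σ (-(1/4))) (mpow σ (-(1/4))), hvv]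
  rw [← hid]
  exact key
end
end

section
/- (Choi-state 2-norm identity.) Let T̃: L(A₀⊗…⊗A_{k−1})→L(E) be a CP map with Choi state ω̃ := (I⊗T̃)(⊗_{i} Φ^{Â_iA_i}) on Â₀⊗…⊗Â_{k−1}⊗E, and let T̃† denote its Hilbert–Schmidt adjoint. Then for every bit string b ∈ {0,1}^k, Tr[ (⊗_{i} (F^{A_iA_i'})^{b_i}) · (T̃†⊗T̃†)(F^{EE'}) ] = (∏_i |A_i|)² · Tr[(ω̃^{Â^b E})²], where A_i' ≅ A_i and E' ≅ E are copies on which the second tensor factor acts, (F^{A_iA_i'})^{0} := I^{A_iA_i'}, and Â^b denotes the subsystem consisting of those Â_i with b_i = 1 (so ω̃^{Â^b E} is the marginal of ω̃ on those Â_i together with E). -/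
open scoped Kronecker ComplexOrder
open MeasureTheory Matrix

noncomputable section

section Aux

open QIT Matrix

/-- Hermiticity of the values of a CP map on basis matrices (Choi matrix is Hermitian). -/
private lemma herm_of_cp {F E : Type*} [Fintype F] [DecidableEq F] [Fintype E]
    (T : Matrix F F ℂ → Matrix E E ℂ) (hT : IsCPMap T) (u v : F) (x y : E) :
    star (T (Matrix.single u v 1) x y) = T (Matrix.single v u 1) y x := by
  classical
  set n := Fintype.card F with hn
  set e : F ≃ Fin n := Fintype.equivFin F with he
  set w : Matrix (Fin 1) (F × Fin n) ℂ := fun _ p => if e p.1 = p.2 then 1 else 0 with hw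
  have hpsd := hT.2 n (wᴴ * w) (Matrix.posSemidef_conjTranspose_mul_self w)
  have hherm := hpsd.1
  have hent : ∀ (j l : Fin n), (fun a b' => (wᴴ * w) (a, j) (b', l))
      = Matrix.single (e.symm j) (e.symm l) (1 : ℂ) := by
    intro j l
    funext a b'
    have h1 : (wᴴ * w) (a, j) (b', l)
        = (if e a = j then (1:ℂ) else 0) * (if e b' = l then (1:ℂ) else 0) := by
      rw [Matrix.mul_apply]
      simp only [Matrix.conjTranspose_apply]
      simp [hw, apply_ite (starRingEnd ℂ)]
    rw [h1]
    by_cases h2 : e a = j <;> by_cases h3 : e b' = l <;>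
      simp [Matrix.single, Matrix.of_apply, Equiv.symm_apply_eq, h2, h3] <;>
      first
        | (rw [if_neg]; exact fun hc => h3 hc.symm)
        | (rw [if_neg]; exact fun hc => h2 hc.symm)
        | (rw [if_neg]; exact fun hc => h2 hc.1.symm)
        | exact fun hc => h3 hc.symm
        | exact fun hc => h2 hc.symm
        | exact fun hc => absurd hc.symm h2
  have h1 : matExt T (wᴴ * w) (x, e u) (y, e v) = T (Matrix.single u v 1) x y := by
    show T (fun a b' => (wᴴ * w) (a, e u) (b', e v)) x y = _
    rw [hent]; simp
  have h2 : matExt T (wᴴ * w) (y, e v) (x, e u) = T (Matrix.single v u 1) y x := by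
    show T (fun a b' => (wᴴ * w) (a, e v) (b', e u)) y x = _
    rw [hent]; simp
  have := hherm.apply (y, e v) (x, e u)
  rw [h1, h2] at this
  exact this

/-- `swapProd` as a Kronecker delta. -/
private lemma swapProd_eq_ite {k : ℕ} {A : Fin k → Type*} [∀ i, Fintype (A i)]
    [∀ i, DecidableEq (A i)] (b : Fin k → Bool) (p q : (∀ i, A i) × (∀ i, A i)) :
    swapProd (a := A) b p q =
      if p = ((fun i => if b i then q.2 i else q.1 i : ∀ i, A i),
              (fun i => if b i then q.1 i else q.2 i : ∀ i, A i))
      then 1 else 0 := by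
  classical
  unfold QIT.swapProd
  by_cases hp : p = ((fun i => if b i then q.2 i else q.1 i : ∀ i, A i),
              (fun i => if b i then q.1 i else q.2 i : ∀ i, A i))
  · rw [if_pos hp]
    refine Finset.prod_eq_one fun i _ => ?_
    have h1 : p.1 i = if b i then q.2 i else q.1 i := by rw [hp]
    have h2 : p.2 i = if b i then q.1 i else q.2 i := by rw [hp]
    cases hb : b i <;> simp_all
  · rw [if_neg hp]
    have hex : ∃ i, ¬ (p.1 i = (if b i then q.2 i else q.1 i) ∧
        p.2 i = (if b i then q.1 i else q.2 i)) := by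
      by_contra hc
      push_neg at hc
      exact hp (Prod.ext_iff.mpr ⟨funext fun i => (hc i).1, funext fun i => (hc i).2⟩)
    obtain ⟨i, hi⟩ := hex
    refine Finset.prod_eq_zero (Finset.mem_univ i) ?_
    cases hb : b i <;> simp_all

/-- `hsAdj` on basis matrices. -/
private lemma hsAdj_std {F E : Type*} [Fintype F] [DecidableEq F] [Fintype E] [DecidableEq E]
    (T : Matrix F F ℂ → Matrix E E ℂ) (x y : E) (u v : F) :
    hsAdj T (Matrix.single x y 1) u v = star (T (Matrix.single u v 1) x y) := by
  unfold QIT.hsAdj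
  congr 1
  simp [Matrix.trace, Matrix.diag, Matrix.mul_apply, Matrix.conjTranspose_apply,
    Matrix.single, Matrix.of_apply, ite_and, apply_ite (starRingEnd ℂ)]

/-- `tensorSup (hsAdj T) (hsAdj T)` applied to the swap operator. -/
private lemma tensorSup_swap_apply {F E : Type*} [Fintype F] [DecidableEq F]
    [Fintype E] [DecidableEq E]
    (T : Matrix F F ℂ → Matrix E E ℂ) (p q : F × F) :
    tensorSup (hsAdj T) (hsAdj T) (swapOp E) p q
      = ∑ x : E, ∑ x' : E,
          star (T (Matrix.single p.1 q.1 1) x x') *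
          star (T (Matrix.single p.2 q.2 1) x' x) := by
  classical
  unfold QIT.tensorSup QIT.swapOp
  refine Finset.sum_congr rfl fun x _ => ?_
  rw [Finset.sum_comm]
  refine Finset.sum_congr rfl fun x' _ => ?_
  simp [ite_and, hsAdj_std]

/-- Merging equivalence. -/
private def mergeEquiv {k : ℕ} (A : Fin k → Type*) (b : Fin k → Bool) :
    ((∀ i : {i // b i = true}, A i.1) × (∀ i : {i // b i = false}, A i.1)) ≃ (∀ i, A i) where
  toFun p := QIT.bmerge b p.1 p.2
  invFun f := (fun i => f i.1, fun i => f i.1)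
  left_inv p := by
    ext i
    · simp [QIT.bmerge, i.2]
    · have h2 : ¬ (b i.1 = true) := by simp [i.2]
      simp [QIT.bmerge, h2]
  right_inv f := by
    funext i
    by_cases h : b i = true <;> simp [QIT.bmerge, h]

private lemma merge_select_true {k : ℕ} {A : Fin k → Type*} (b : Fin k → Bool)
    (u : ∀ i : {i // b i = true}, A i.1) (g h : ∀ i : {i // b i = false}, A i.1)
    (v : ∀ i : {i // b i = true}, A i.1) :
    (fun i => if b i then QIT.bmerge b u h i else QIT.bmerge b v g i) = QIT.bmerge b u g := by
  funext i
  by_cases hb : b i = true <;> simp [QIT.bmerge, hb]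


private lemma fuse {α β : Type*} [Fintype α] [Fintype β] (f : α → β → ℂ) :
    (∑ a, ∑ b, f a b) = ∑ p : α × β, f p.1 p.2 :=
  (Fintype.sum_prod_type (f := fun p : α × β => f p.1 p.2)).symm

private lemma fuse3 {α β γ : Type*} [Fintype α] [Fintype β] [Fintype γ]
    (f : α → β → γ → ℂ) :
    (∑ a, ∑ b, ∑ c, f a b c) = ∑ z : α × (β × γ), f z.1 z.2.1 z.2.2 :=
  (Finset.sum_congr rfl fun a _ => fuse (f a)).trans
    (fuse (fun a (p : β × γ) => f a p.1 p.2))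

private lemma fuse4 {α β γ δ : Type*} [Fintype α] [Fintype β] [Fintype γ] [Fintype δ]
    (f : α → β → γ → δ → ℂ) :
    (∑ a, ∑ b, ∑ c, ∑ d, f a b c d)
      = ∑ z : (α × β) × (γ × δ), f z.1.1 z.1.2 z.2.1 z.2.2 :=
  (Finset.sum_congr rfl fun a _ => Finset.sum_congr rfl fun b _ => fuse (f a b)).trans
    ((fuse (fun a b => ∑ p : γ × δ, f a b p.1 p.2)).trans
      (fuse (fun (q : α × β) (p : γ × δ) => f q.1 q.2 p.1 p.2)))

/-- The big index shuffle. -/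
private def bigEquiv {k : ℕ} (A : Fin k → Type*) (b : Fin k → Bool) (E : Type*) :
    (((((i : {i // b i = true}) → A i.1) × E) × ((((i : {i // b i = true}) → A i.1)) × E)) ×
        (((i : {i // b i = false}) → A i.1) × ((i : {i // b i = false}) → A i.1)))
      ≃ (((∀ i, A i) × (∀ i, A i)) × (E × E)) where
  toFun w := ((QIT.bmerge b w.1.2.1 w.2.1, QIT.bmerge b w.1.1.1 w.2.2), (w.1.2.2, w.1.1.2))
  invFun y := (((fun i => y.1.2 i.1, y.2.2), (fun i => y.1.1 i.1, y.2.1)),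
    (fun i => y.1.1 i.1, fun i => y.1.2 i.1))
  left_inv w := by
    have ht : ∀ (u : (i : {i // b i = true}) → A i.1) (h : (i : {i // b i = false}) → A i.1),
        (fun i : {i // b i = true} => QIT.bmerge b u h i.1) = u := by
      intro u h; funext i; simp [QIT.bmerge, i.2]
    have hf : ∀ (u : (i : {i // b i = true}) → A i.1) (h : (i : {i // b i = false}) → A i.1),
        (fun i : {i // b i = false} => QIT.bmerge b u h i.1) = h := by
      intro u h; funext i
      have hi : ¬ (b i.1 = true) := by simp [i.2]
      simp [QIT.bmerge, hi]
    show ((((fun i : {i // b i = true} => QIT.bmerge b w.1.1.1 w.2.2 i.1), w.1.1.2),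
        ((fun i : {i // b i = true} => QIT.bmerge b w.1.2.1 w.2.1 i.1), w.1.2.2)),
        ((fun i : {i // b i = false} => QIT.bmerge b w.1.2.1 w.2.1 i.1),
         (fun i : {i // b i = false} => QIT.bmerge b w.1.1.1 w.2.2 i.1))) = w
    rw [ht, ht, hf, hf]
  right_inv y := by
    have hm : ∀ f : ∀ i, A i,
        QIT.bmerge b (fun i : {i // b i = true} => f i.1)
          (fun i : {i // b i = false} => f i.1) = f := by
      intro f; funext i
      by_cases h : b i = true <;> simp [QIT.bmerge, h]
    show ((QIT.bmerge b (fun i : {i // b i = true} => y.1.1 i.1)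
            (fun i : {i // b i = false} => y.1.1 i.1),
          QIT.bmerge b (fun i : {i // b i = true} => y.1.2 i.1)
            (fun i : {i // b i = false} => y.1.2 i.1)), (y.2.1, y.2.2)) = y
    rw [hm, hm]

end Aux

open QIT in
/-- Choi-state 2-norm identity: for a CP map `T̃` with Choi state `ω̃`
and every bit string `b ∈ {0,1}^k`,
`Tr[(⊗ᵢ(F^{AᵢAᵢ'})^{bᵢ})·(T̃†⊗T̃†)(F^{EE'})] = (∏ᵢ|Aᵢ|)²·Tr[(ω̃^{Â^bE})²]`. -/
theorem choi_two_norm_identity {k : ℕ} {A : Fin k → Type*} [∀ i, Fintype (A i)]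
    [∀ i, DecidableEq (A i)] {E : Type*} [Fintype E] [DecidableEq E]
    (T : Matrix (∀ i, A i) (∀ i, A i) ℂ → Matrix E E ℂ) (hT : IsCPMap T)
    (b : Fin k → Bool) :
    Matrix.trace (swapProd (a := A) b * tensorSup (hsAdj T) (hsAdj T) (swapOp E))
      = (∏ i, (Fintype.card (A i) : ℂ)) ^ 2 *
        Matrix.trace (margB b (choi T) * margB b (choi T)) := by
  classical
  by_cases hne : Nonempty (∀ i, A i)
  swap
  · have hE : IsEmpty (∀ i, A i) := not_nonempty_iff.mp hne
    have h0 : (∏ i, (Fintype.card (A i) : ℂ)) = 0 := by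
      have h1 : ∏ i, Fintype.card (A i) = 0 := by
        rw [← Fintype.card_pi]; exact Fintype.card_eq_zero
      rw [← Nat.cast_prod, h1, Nat.cast_zero]
    rw [h0]
    simp [Matrix.trace]
  · haveI := hne
    have hcard : ((Fintype.card (∀ i, A i) : ℂ)) ≠ 0 := by
      exact_mod_cast Fintype.card_ne_zero
    have hprod : (∏ i, (Fintype.card (A i) : ℂ)) = (Fintype.card (∀ i, A i) : ℂ) := by
      rw [Fintype.card_pi, Nat.cast_prod]
    -- Step 1: collapse the swap-product delta
    have hL1 : Matrix.trace (swapProd (a := A) b * tensorSup (hsAdj T) (hsAdj T) (swapOp E))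
        = ∑ q : (∀ i, A i) × (∀ i, A i),
            tensorSup (hsAdj T) (hsAdj T) (swapOp E) q
              ((fun i => if b i then q.2 i else q.1 i : ∀ i, A i),
               (fun i => if b i then q.1 i else q.2 i : ∀ i, A i)) := by
      simp only [Matrix.trace, Matrix.diag, Matrix.mul_apply]
      rw [Finset.sum_comm]
      refine Finset.sum_congr rfl fun q _ => ?_
      simp [swapProd_eq_ite]
    -- Step 2: expand the tensorSup term and use Hermiticity
    have hL2 : ∀ q : (∀ i, A i) × (∀ i, A i),
        tensorSup (hsAdj T) (hsAdj T) (swapOp E) q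
          ((fun i => if b i then q.2 i else q.1 i : ∀ i, A i),
           (fun i => if b i then q.1 i else q.2 i : ∀ i, A i))
        = ∑ x : E, ∑ x' : E,
            T (Matrix.single (fun i => if b i then q.2 i else q.1 i) q.1 1) x' x *
            T (Matrix.single (fun i => if b i then q.1 i else q.2 i) q.2 1) x x' := by
      intro q
      rw [tensorSup_swap_apply]
      exact Finset.sum_congr rfl fun x _ => Finset.sum_congr rfl fun x' _ => by
        rw [herm_of_cp T hT, herm_of_cp T hT]
    -- Step 3: expand the RHS trace
    have hR1 : Matrix.trace (margB b (choi T) * margB b (choi T))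
        = ∑ P : ((i : {i // b i = true}) → A i.1) × E,
            ∑ Q : ((i : {i // b i = true}) → A i.1) × E,
            (∑ g : (i : {i // b i = false}) → A i.1,
              (Fintype.card (∀ i, A i) : ℂ)⁻¹ *
                T (Matrix.single (bmerge b P.1 g) (bmerge b Q.1 g) 1) P.2 Q.2) *
            (∑ h : (i : {i // b i = false}) → A i.1,
              (Fintype.card (∀ i, A i) : ℂ)⁻¹ *
                T (Matrix.single (bmerge b Q.1 h) (bmerge b P.1 h) 1) Q.2 P.2) := by
      simp only [Matrix.trace, Matrix.diag, Matrix.mul_apply, QIT.margB, QIT.choi]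
    have hterm : ∀ z w : ℂ,
        ((Fintype.card (∀ i, A i) : ℂ)) ^ 2 *
          (((Fintype.card (∀ i, A i) : ℂ))⁻¹ * z * (((Fintype.card (∀ i, A i) : ℂ))⁻¹ * w))
          = z * w := by
      intro z w
      have h2 : (∏ i, (Fintype.card (A i) : ℂ)) ≠ 0 := by rw [hprod]; exact hcard
      field_simp [h2]
    rw [hL1]
    simp_rw [hL2]
    rw [fuse3]
    rw [hR1, hprod]
    simp_rw [Finset.sum_mul_sum, Finset.mul_sum, hterm]
    rw [fuse4]
    refine (Fintype.sum_equiv (bigEquiv A b E) _ _ ?_).symm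
    intro w
    simp only [bigEquiv, Equiv.coe_fn_mk]
    rw [merge_select_true b w.1.1.1 w.2.1 w.2.2 w.1.2.1,
        merge_select_true b w.1.2.1 w.2.2 w.2.1 w.1.1.1]
end
end
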